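/- arXiv:1810.05426 — 3 statements merged into one kernel-verified Lean document; each statement's English description precedes it below -/
import Mathlib

section
/- For 0 < r < 1, let P(r) = (1 + e^{−π}(r^{−2} − 1))^{−1/2}. Then 0 < P(r) < 1 and the integral identity ∫_r^{P(r)} du / (u(1 − u²)) = π/2 holds. -/
open Real

/-- For `0 < r < 1`, let `P r = (1 + e^{−π}(r⁻² − 1))^{−1/2}`.
Then `0 < P r < 1` and `∫_r^{P r} du / (u (1 − u²)) = π / 2`. -/
theorem poincare_map_integral_identity (r : ℝ) (hr0 : 0 < r) (hr1 : r < 1)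
    (P : ℝ → ℝ)
    (hP : ∀ s : ℝ, P s = (1 + Real.exp (-π) * ((s ^ 2)⁻¹ - 1)) ^ (-(1 / 2) : ℝ)) :
    0 < P r ∧ P r < 1 ∧
    (∫ u in r..(P r), 1 / (u * (1 - u ^ 2))) = π / 2 := by
  have hr2 : r ^ 2 < 1 := by nlinarith
  have hr2pos : 0 < r ^ 2 := by positivity
  have hinv : 1 < (r ^ 2)⁻¹ := by
    rw [lt_inv_comm₀ one_pos hr2pos]
    simpa using hr2
  set A : ℝ := 1 + Real.exp (-π) * ((r ^ 2)⁻¹ - 1) with hA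
  have hexp : 0 < Real.exp (-π) := Real.exp_pos _
  have hA1 : 1 < A := by
    have : 0 < Real.exp (-π) * ((r ^ 2)⁻¹ - 1) := by
      apply mul_pos hexp; linarith
    simp [hA]; linarith
  have hA0 : 0 < A := by linarith
  have hPr : P r = A ^ (-(1 / 2) : ℝ) := hP r
  have hPpos : 0 < P r := by rw [hPr]; exact Real.rpow_pos_of_pos hA0 _
  have hPlt1 : P r < 1 := by
    rw [hPr]
    exact Real.rpow_lt_one_of_one_lt_of_neg hA1 (by norm_num)
  refine ⟨hPpos, hPlt1, ?_⟩
  -- square of P r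
  have hPsq : (P r) ^ 2 = A⁻¹ := by
    rw [hPr, ← Real.rpow_natCast (A ^ (-(1/2):ℝ)) 2, ← Real.rpow_mul hA0.le]
    norm_num [Real.rpow_neg_one]
  have hPsq1 : 1 - (P r) ^ 2 = (A - 1) / A := by
    rw [hPsq]; field_simp
  have hPsq1pos : 0 < 1 - (P r) ^ 2 := by
    rw [hPsq1]; exact div_pos (by linarith) hA0
  -- FTC
  set f : ℝ → ℝ := fun u => Real.log u - Real.log (1 - u ^ 2) / 2 with hf
  have hmem : ∀ u ∈ Set.uIcc r (P r), 0 < u ∧ u < 1 := by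
    intro u hu
    rw [Set.mem_uIcc] at hu
    rcases hu with ⟨h1, h2⟩ | ⟨h1, h2⟩
    · exact ⟨lt_of_lt_of_le hr0 h1, lt_of_le_of_lt h2 hPlt1⟩
    · exact ⟨lt_of_lt_of_le hPpos h1, lt_of_le_of_lt h2 hr1⟩
  have hderiv : ∀ u ∈ Set.uIcc r (P r),
      HasDerivAt f (1 / (u * (1 - u ^ 2))) u := by
    intro u hu
    obtain ⟨hu0, hu1⟩ := hmem u hu
    have hu2 : 1 - u ^ 2 ≠ 0 := by nlinarith
    have h1 : HasDerivAt (fun u : ℝ => Real.log u) u⁻¹ u := Real.hasDerivAt_log (ne_of_gt hu0)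
    have h2 : HasDerivAt (fun u : ℝ => 1 - u ^ 2) (-(2 * u)) u := by
      have := ((hasDerivAt_pow 2 u).const_sub 1)
      simpa using this
    have h3 : HasDerivAt (fun u : ℝ => Real.log (1 - u ^ 2)) (-(2 * u) / (1 - u ^ 2)) u :=
      h2.log hu2
    have := h1.sub ((h3.div_const 2))
    refine this.congr_deriv ?_
    field_simp [hu0.ne', hu2]
    ring
  have hcont : IntervalIntegrable (fun u => 1 / (u * (1 - u ^ 2)))
      MeasureTheory.volume r (P r) := by
    apply ContinuousOn.intervalIntegrable
    apply ContinuousOn.div continuousOn_const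
    · fun_prop
    · intro u hu
      obtain ⟨hu0, hu1⟩ := hmem u hu
      have : 0 < 1 - u ^ 2 := by nlinarith
      exact ne_of_gt (mul_pos hu0 this)
  have hint := intervalIntegral.integral_eq_sub_of_hasDerivAt hderiv hcont
  rw [hint]
  -- now compute f (P r) - f r
  have hlogP : Real.log (P r) = -(1/2) * Real.log A := by
    rw [hPr, Real.log_rpow hA0]
  have hlog1P : Real.log (1 - (P r) ^ 2) = Real.log (A - 1) - Real.log A := by
    rw [hPsq1, Real.log_div (by linarith) (ne_of_gt hA0)]
  have hlogA1 : Real.log (A - 1) = -π + Real.log (1 - r ^ 2) - 2 * Real.log r := by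
    have hA1' : A - 1 = Real.exp (-π) * ((1 - r ^ 2) / r ^ 2) := by
      simp only [hA]; field_simp; ring
    rw [hA1', Real.log_mul (ne_of_gt hexp) (div_pos (by nlinarith) hr2pos).ne',
      Real.log_div (by nlinarith) (ne_of_gt hr2pos), Real.log_exp,
      Real.log_pow]
    push_cast; ring
  simp only [hf]
  rw [hlogP, hlog1P, hlogA1]
  ring
end

section
/- For c > 0, define Θ_c : ℝ → ℝ by Θ_c(r) = (1 + e^{−π}(e^{−2c(r−1)} − 1))^{−1/2}. Then the radicand 1 + e^{−π}(e^{−2c(r−1)} − 1) is positive for every r ∈ ℝ (it exceeds 1 − e^{−π} > 0), Θ_c(1) = 1, Θ_c is differentiable with Θ_c′(r) = c e^{−2c(r−1)−π}(1 + e^{−π}(e^{−2c(r−1)} − 1))^{−3/2}, and in particular Θ_c′(1) = c e^{−π}. Consequently, for c₁ ≠ c₂ the maps Θ_{c₁} and Θ_{c₂} have distinct derivatives at their common fixed point 1. -/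
open Real

/-- For `c > 0`, define `Θ_c(r) = (1 + e^{−π}(e^{−2c(r−1)} − 1))^{−1/2}`.
Then the radicand is positive for every `r` (it exceeds `1 − e^{−π} > 0`), `Θ_c(1) = 1`,
`Θ_c` is differentiable with
`Θ_c′(r) = c e^{−2c(r−1)−π} (1 + e^{−π}(e^{−2c(r−1)} − 1))^{−3/2}`, and `Θ_c′(1) = c e^{−π}`.
Consequently, for `c₁ ≠ c₂` the maps `Θ_{c₁}` and `Θ_{c₂}` have distinct derivatives at their
common fixed point `1`. -/
theorem poincare_map_modified_reset_derivative
    (Θ : ℝ → ℝ → ℝ)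
    (hΘ : ∀ c r : ℝ,
      Θ c r = (1 + Real.exp (-π) * (Real.exp (-2 * c * (r - 1)) - 1)) ^ (-(1 / 2) : ℝ)) :
    (∀ c r : ℝ, 0 < c →
      1 - Real.exp (-π) < 1 + Real.exp (-π) * (Real.exp (-2 * c * (r - 1)) - 1) ∧
      0 < 1 + Real.exp (-π) * (Real.exp (-2 * c * (r - 1)) - 1)) ∧
    (0 : ℝ) < 1 - Real.exp (-π) ∧
    (∀ c : ℝ, 0 < c → Θ c 1 = 1) ∧
    (∀ c r : ℝ, 0 < c → HasDerivAt (Θ c)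
      (c * Real.exp (-2 * c * (r - 1) - π) *
        (1 + Real.exp (-π) * (Real.exp (-2 * c * (r - 1)) - 1)) ^ (-(3 / 2) : ℝ)) r) ∧
    (∀ c : ℝ, 0 < c → deriv (Θ c) 1 = c * Real.exp (-π)) ∧
    (∀ c₁ c₂ : ℝ, 0 < c₁ → 0 < c₂ → c₁ ≠ c₂ → deriv (Θ c₁) 1 ≠ deriv (Θ c₂) 1) := by
  have hlt : ∀ c r : ℝ, 1 - Real.exp (-π) <
      1 + Real.exp (-π) * (Real.exp (-2 * c * (r - 1)) - 1) := by
    intro c r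
    have h1 := Real.exp_pos (-π)
    have h2 := Real.exp_pos (-2 * c * (r - 1))
    nlinarith
  have hebound : (0:ℝ) < 1 - Real.exp (-π) := by
    have : Real.exp (-π) < 1 := Real.exp_lt_one_iff.mpr (by linarith [Real.pi_pos])
    linarith
  have hpos : ∀ c r : ℝ, 0 < 1 + Real.exp (-π) * (Real.exp (-2 * c * (r - 1)) - 1) := by
    intro c r; linarith [hlt c r]
  have hfix : ∀ c : ℝ, Θ c 1 = 1 := by
    intro c
    rw [hΘ]
    norm_num
  have hderiv : ∀ c r : ℝ, 0 < c → HasDerivAt (Θ c)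
      (c * Real.exp (-2 * c * (r - 1) - π) *
        (1 + Real.exp (-π) * (Real.exp (-2 * c * (r - 1)) - 1)) ^ (-(3 / 2) : ℝ)) r := by
    intro c r hc
    have h1 : HasDerivAt (fun x : ℝ => -2 * c * (x - 1)) (-2 * c) r := by
      simpa using ((hasDerivAt_id r).sub_const 1).const_mul (-2 * c)
    have h2 : HasDerivAt (fun x : ℝ => 1 + Real.exp (-π) * (Real.exp (-2 * c * (x - 1)) - 1))
        (Real.exp (-π) * (Real.exp (-2 * c * (r - 1)) * (-2 * c))) r := by
      simpa using (((h1.exp).sub_const 1).const_mul (Real.exp (-π))).const_add 1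
    have h3 := h2.rpow_const (p := -(1/2)) (Or.inl (ne_of_gt (hpos c r)))
    have hΘeq : Θ c = fun x =>
        (1 + Real.exp (-π) * (Real.exp (-2 * c * (x - 1)) - 1)) ^ (-(1 / 2) : ℝ) := by
      funext x; exact hΘ c x
    rw [hΘeq]
    convert h3 using 1
    rw [Real.exp_sub, div_eq_mul_inv, ← Real.exp_neg, show (-(1/2) : ℝ) - 1 = -(3/2) by norm_num]
    ring
  have hd1 : ∀ c : ℝ, 0 < c → deriv (Θ c) 1 = c * Real.exp (-π) := by
    intro c hc
    have h := (hderiv c 1 hc).deriv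
    rw [h]
    norm_num
  refine ⟨fun c r hc => ⟨hlt c r, hpos c r⟩, hebound, fun c _ => hfix c, hderiv, hd1, ?_⟩
  intro c₁ c₂ hc₁ hc₂ hne heq
  rw [hd1 c₁ hc₁, hd1 c₂ hc₂] at heq
  exact hne (mul_right_cancel₀ (ne_of_gt (Real.exp_pos _)) heq)
end

section
/- For c > 0, let Θ_c : ℝ → ℝ be Θ_c(r) = (1 + e^{−π}(e^{−2c(r−1)} − 1))^{−1/2}, which has fixed point Θ_c(1) = 1. If 0 < c < e^{π}, then the fixed point 1 is locally asymptotically stable for the discrete dynamical system generated by Θ_c: there exists ε > 0 such that for every r with |r − 1| < ε, the iterates Θ_c^k(r) converge to 1 as k → ∞. If c > e^{π}, then the fixed point 1 is unstable: there exists ε > 0 such that for every r ≠ 1 with |r − 1| < ε there is some k ∈ ℕ with |Θ_c^k(r) − 1| ≥ ε. -/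
open Real Filter

private noncomputable def gfun (c r : ℝ) : ℝ :=
  1 + Real.exp (-π) * (Real.exp (-2 * c * (r - 1)) - 1)

private noncomputable def Dfun (c r : ℝ) : ℝ :=
  (Real.exp (-π) * (Real.exp (-2 * c * (r - 1)) * (-2 * c))) * (-(1 / 2)) *
    (gfun c r) ^ ((-(1 / 2) : ℝ) - 1)

private lemma gfun_one (c : ℝ) : gfun c 1 = 1 := by simp [gfun]

private lemma Dfun_one (c : ℝ) : Dfun c 1 = c * Real.exp (-π) := by
  simp [Dfun, gfun_one]
  ring

private lemma hasDerivAt_theta (c r : ℝ) (hg : gfun c r ≠ 0) :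
    HasDerivAt (fun x => (gfun c x) ^ (-(1 / 2) : ℝ)) (Dfun c r) r := by
  have hu : HasDerivAt (fun x : ℝ => -2 * c * (x - 1)) (-2 * c) r := by
    simpa using ((hasDerivAt_id r).sub_const 1).const_mul (-2 * c)
  have hexp : HasDerivAt (fun x : ℝ => Real.exp (-2 * c * (x - 1)))
      (Real.exp (-2 * c * (r - 1)) * (-2 * c)) r := hu.exp
  have hg' : HasDerivAt (fun x => gfun c x)
      (Real.exp (-π) * (Real.exp (-2 * c * (r - 1)) * (-2 * c))) r := by
    simpa [gfun] using ((hexp.sub_const 1).const_mul (Real.exp (-π))).const_add 1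
  exact hg'.rpow_const (Or.inl hg)

private lemma continuous_gfun (c : ℝ) : Continuous (gfun c) := by
  unfold gfun; fun_prop

private lemma continuousAt_Dfun (c : ℝ) : ContinuousAt (Dfun c) 1 := by
  have h1 : ContinuousAt (fun r : ℝ => (gfun c r) ^ ((-(1 / 2) : ℝ) - 1)) 1 :=
    (continuous_gfun c).continuousAt.rpow_const (Or.inl (by simp [gfun_one]))
  have h2 : Continuous (fun r : ℝ =>
      Real.exp (-π) * (Real.exp (-2 * c * (r - 1)) * (-2 * c)) * (-(1 / 2))) := by
    fun_prop
  exact h2.continuousAt.mul h1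

/-- Mean value theorem step. -/
private lemma mvt_aux (c δ : ℝ) (f : ℝ → ℝ)
    (hderiv : ∀ x, |x - 1| < δ → HasDerivAt f (Dfun c x) x)
    (r : ℝ) (hr : |r - 1| < δ) (hne : r ≠ 1) :
    ∃ ξ, |ξ - 1| < δ ∧ f r - f 1 = Dfun c ξ * (r - 1) := by
  have hr' := abs_lt.mp hr
  rcases lt_or_gt_of_ne hne with h | h
  · have hcont : ContinuousOn f (Set.Icc r 1) := fun x hx =>
      (hderiv x (abs_lt.mpr ⟨by linarith [hx.1], by linarith [hx.2]⟩)).continuousAt.continuousWithinAt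
    have hd : ∀ x ∈ Set.Ioo r 1, HasDerivAt f (Dfun c x) x := fun x hx =>
      hderiv x (abs_lt.mpr ⟨by linarith [hx.1], by linarith [hx.2]⟩)
    obtain ⟨ξ, hξ, heq⟩ := exists_hasDerivAt_eq_slope f (Dfun c) h hcont hd
    refine ⟨ξ, abs_lt.mpr ⟨by linarith [hξ.1], by linarith [hξ.2]⟩, ?_⟩
    have hne1 : (1 : ℝ) - r ≠ 0 := by linarith [hξ.1, hξ.2]
    field_simp at heq
    linear_combination heq
  · have hcont : ContinuousOn f (Set.Icc 1 r) := fun x hx =>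
      (hderiv x (abs_lt.mpr ⟨by linarith [hx.1], by linarith [hx.2]⟩)).continuousAt.continuousWithinAt
    have hd : ∀ x ∈ Set.Ioo 1 r, HasDerivAt f (Dfun c x) x := fun x hx =>
      hderiv x (abs_lt.mpr ⟨by linarith [hx.1], by linarith [hx.2]⟩)
    obtain ⟨ξ, hξ, heq⟩ := exists_hasDerivAt_eq_slope f (Dfun c) h hcont hd
    refine ⟨ξ, abs_lt.mpr ⟨by linarith [hξ.1], by linarith [hξ.2]⟩, ?_⟩
    have hne1 : r - (1 : ℝ) ≠ 0 := by linarith [hξ.1, hξ.2]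
    field_simp at heq
    linear_combination -heq

/-- For `c > 0`, let `Θ_c(r) = (1 + e^{−π}(e^{−2c(r−1)} − 1))^{−1/2}`, with
fixed point `Θ_c(1) = 1`.  If `0 < c < e^π`, the fixed point `1` is locally asymptotically
stable for the discrete dynamical system generated by `Θ_c`: there is `ε > 0` such that for
every `r` with `|r − 1| < ε` the iterates `Θ_c^[k] r` converge to `1`.  If `c > e^π`, the
fixed point `1` is unstable: there is `ε > 0` such that for every `r ≠ 1` with `|r − 1| < ε`
there is some `k` with `|Θ_c^[k] r − 1| ≥ ε`. -/
theorem poincare_map_fixed_point_stability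
    (c : ℝ) (hc : 0 < c) (Θ : ℝ → ℝ)
    (hΘ : ∀ r : ℝ,
      Θ r = (1 + Real.exp (-π) * (Real.exp (-2 * c * (r - 1)) - 1)) ^ (-(1 / 2) : ℝ)) :
    Θ 1 = 1 ∧
    (c < Real.exp π →
      ∃ ε > 0, ∀ r : ℝ, |r - 1| < ε →
        Tendsto (fun k : ℕ => Θ^[k] r) atTop (nhds 1)) ∧
    (Real.exp π < c →
      ∃ ε > 0, ∀ r : ℝ, r ≠ 1 → |r - 1| < ε →
        ∃ k : ℕ, ε ≤ |Θ^[k] r - 1|) := by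
  have hfun : Θ = fun r => (gfun c r) ^ (-(1 / 2) : ℝ) := funext fun r => by
    rw [hΘ r]; rfl
  have hΘ1 : Θ 1 = 1 := by rw [hfun]; simp [gfun_one]
  have hgpos : ∀ᶠ x in nhds (1 : ℝ), 0 < gfun c x :=
    (continuous_gfun c).continuousAt.eventually_mem
      (show Set.Ioi (0:ℝ) ∈ nhds (gfun c 1) by
        rw [gfun_one]; exact Ioi_mem_nhds one_pos)
  have hderiv : ∀ x, 0 < gfun c x → HasDerivAt Θ (Dfun c x) x := fun x hx => by
    rw [hfun]; exact hasDerivAt_theta c x (ne_of_gt hx)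
  refine ⟨hΘ1, ?_, ?_⟩
  · -- stability
    intro hlt
    have hd1 : c * Real.exp (-π) < 1 := by
      have := Real.exp_pos π
      rw [Real.exp_neg]
      rw [mul_inv_lt_iff₀ (Real.exp_pos π)]
      linarith
    set lam : ℝ := (1 + c * Real.exp (-π)) / 2 with hlam
    have hlam0 : 0 < lam := by positivity
    have hlam1 : lam < 1 := by rw [hlam]; linarith
    have hDlt : ∀ᶠ x in nhds (1 : ℝ), |Dfun c x| < lam := by
      have habs : ContinuousAt (fun x => |Dfun c x|) 1 := (continuousAt_Dfun c).abs
      have : |Dfun c 1| < lam := by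
        rw [Dfun_one, abs_of_pos (by positivity)]
        rw [hlam]; linarith
      exact habs.eventually_mem (Iio_mem_nhds this)
    obtain ⟨δ, hδ, hball⟩ := Metric.eventually_nhds_iff.mp (hgpos.and hDlt)
    simp only [Real.dist_eq] at hball
    have hder' : ∀ x, |x - 1| < δ → HasDerivAt Θ (Dfun c x) x := fun x hx =>
      hderiv x (hball hx).1
    have key : ∀ r, |r - 1| < δ → |Θ r - 1| ≤ lam * |r - 1| := by
      intro r hr
      rcases eq_or_ne r 1 with rfl | hne
      · simp [hΘ1]
      · obtain ⟨ξ, hξ, heq⟩ := mvt_aux c δ Θ hder' r hr hne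
        rw [show Θ r - 1 = Θ r - Θ 1 by rw [hΘ1], heq, abs_mul]
        exact mul_le_mul_of_nonneg_right (le_of_lt (hball hξ).2) (abs_nonneg _)
    refine ⟨δ, hδ, fun r hr => ?_⟩
    have iter : ∀ k, |Θ^[k] r - 1| ≤ lam ^ k * |r - 1| ∧ |Θ^[k] r - 1| < δ := by
      intro k
      induction k with
      | zero => simpa using hr
      | succ k ih =>
        rw [Function.iterate_succ_apply']
        have h1 : |Θ (Θ^[k] r) - 1| ≤ lam * |Θ^[k] r - 1| := key _ ih.2
        have h2 : lam * |Θ^[k] r - 1| ≤ lam * (lam ^ k * |r - 1|) :=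
          mul_le_mul_of_nonneg_left ih.1 (le_of_lt hlam0)
        constructor
        · calc |Θ (Θ^[k] r) - 1| ≤ lam * (lam ^ k * |r - 1|) := le_trans h1 h2
            _ = lam ^ (k + 1) * |r - 1| := by ring
        · have : lam * |Θ^[k] r - 1| ≤ |Θ^[k] r - 1| := by
            nlinarith [abs_nonneg (Θ^[k] r - 1)]
          linarith [ih.2]
    have hzero : Tendsto (fun k : ℕ => lam ^ k * |r - 1|) atTop (nhds 0) := by
      simpa using
        (tendsto_pow_atTop_nhds_zero_of_lt_one (le_of_lt hlam0) hlam1).mul_const |r - 1|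
    have habs : Tendsto (fun k : ℕ => |Θ^[k] r - 1|) atTop (nhds 0) :=
      squeeze_zero (fun k => abs_nonneg _) (fun k => (iter k).1) hzero
    rw [tendsto_iff_dist_tendsto_zero]
    simpa [Real.dist_eq] using habs
  · -- instability
    intro hgt
    have hd1 : 1 < c * Real.exp (-π) := by
      rw [Real.exp_neg, lt_mul_inv_iff₀ (Real.exp_pos π)]
      linarith
    set mu : ℝ := (1 + c * Real.exp (-π)) / 2 with hmu
    have hmu1 : 1 < mu := by rw [hmu]; linarith
    have hDgt : ∀ᶠ x in nhds (1 : ℝ), mu < Dfun c x := by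
      have : mu < Dfun c 1 := by rw [Dfun_one, hmu]; linarith
      exact (continuousAt_Dfun c).eventually_mem (Ioi_mem_nhds this)
    obtain ⟨δ, hδ, hball⟩ := Metric.eventually_nhds_iff.mp (hgpos.and hDgt)
    simp only [Real.dist_eq] at hball
    have hder' : ∀ x, |x - 1| < δ → HasDerivAt Θ (Dfun c x) x := fun x hx =>
      hderiv x (hball hx).1
    have key : ∀ r, |r - 1| < δ → mu * |r - 1| ≤ |Θ r - 1| := by
      intro r hr
      rcases eq_or_ne r 1 with rfl | hne
      · simp [hΘ1]
      · obtain ⟨ξ, hξ, heq⟩ := mvt_aux c δ Θ hder' r hr hne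
        rw [show Θ r - 1 = Θ r - Θ 1 by rw [hΘ1], heq, abs_mul]
        have hDξ : mu < Dfun c ξ := (hball hξ).2
        have : mu ≤ |Dfun c ξ| := le_trans (le_of_lt hDξ) (le_abs_self _)
        exact mul_le_mul_of_nonneg_right this (abs_nonneg _)
    refine ⟨δ, hδ, fun r hne hr => ?_⟩
    by_contra hcon
    push_neg at hcon
    have iter : ∀ k, mu ^ k * |r - 1| ≤ |Θ^[k] r - 1| := by
      intro k
      induction k with
      | zero => simp
      | succ k ih =>
        rw [Function.iterate_succ_apply']
        have hk : |Θ^[k] r - 1| < δ := hcon k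
        calc mu ^ (k + 1) * |r - 1| = mu * (mu ^ k * |r - 1|) := by ring
          _ ≤ mu * |Θ^[k] r - 1| :=
            mul_le_mul_of_nonneg_left ih (by linarith)
          _ ≤ |Θ (Θ^[k] r) - 1| := key _ hk
    have hrpos : 0 < |r - 1| := abs_pos.mpr (sub_ne_zero.mpr hne)
    obtain ⟨k, hk⟩ := ((tendsto_pow_atTop_atTop_of_one_lt hmu1).eventually_ge_atTop
      (δ / |r - 1|)).exists
    have : δ ≤ mu ^ k * |r - 1| := by
      rw [div_le_iff₀ hrpos] at hk
      linarith
    linarith [iter k, hcon k]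
end
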